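/- Let r ≥ 2 and n, ℓ ≥ 1 be integers, let P ∈ Δ([r]), and let Q_1, …, Q_{nℓ} ∈ Δ([r]). For each t ∈ [n], define R_t := Q_{(t−1)ℓ+1} * Q_{(t−1)ℓ+2} * ⋯ * Q_{tℓ} (modular convolution over [r]). Then H(P‖Q_1,…,Q_{nℓ}) ≤ H(P‖R_1,…,R_n). -/
import Mathlib


open scoped Classical BigOperators

noncomputable section

/-- `P` is a probability distribution on the finite type `α`. -/
def IsProbDist {α : Type*} [Fintype α] (P : α → ℝ) : Prop :=
  (∀ x, 0 ≤ P x) ∧ ∑ x, P x = 1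

/-- Shannon conditional entropy `H(X | Y)` of a joint pmf `π`
(first coordinate `X`, second coordinate `Y`), with the convention `0 log 0 = 0`. -/
def condEnt {α β : Type*} [Fintype α] [Fintype β] (π : α → β → ℝ) : ℝ :=
  - ∑ y : β, ∑ x : α, π x y * Real.log (π x y / ∑ x' : α, π x' y)

/-- `π` is a joint distribution of `(X, (Y_i)_{i : ι})` with `X ∼ P` and `Y_i ∼ Q i`. -/
def IsCouplingList {α ι : Type*} {β : ι → Type*} [Fintype α] [Fintype ι]
    [∀ i, Fintype (β i)] (π : α → ((i : ι) → β i) → ℝ)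
    (P : α → ℝ) (Q : (i : ι) → β i → ℝ) : Prop :=
  (∀ x y, 0 ≤ π x y) ∧ (∀ x, ∑ y, π x y = P x) ∧
    (∀ i b, (∑ x, ∑ y, if y i = b then π x y else 0) = Q i b)

/-- Minimum list entropy coupling `H(P ‖ Q_1, …, Q_m)`: the infimum of the
conditional entropy `H(X | Y_1, …, Y_m)` over all couplings with `X ∼ P`, `Y_i ∼ Q i`. -/
def Hlist {α ι : Type*} {β : ι → Type*} [Fintype α] [Fintype ι] [∀ i, Fintype (β i)]
    (P : α → ℝ) (Q : (i : ι) → β i → ℝ) : ℝ :=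
  sInf {h | ∃ π : α → ((i : ι) → β i) → ℝ, IsCouplingList π P Q ∧ condEnt π = h}

/-- Homogeneous minimum list entropy coupling `H_m(P ‖ Q)`. -/
def Hm {α β : Type*} [Fintype α] [Fintype β] (m : ℕ) (P : α → ℝ) (Q : β → ℝ) : ℝ :=
  Hlist (β := fun _ : Fin m => β) P (fun _ => Q)

/-- The modular convolution of the tuple of distributions `f 0, …, f (ℓ-1)` on `Fin r`:
the law of `Y_0 + ⋯ + Y_{ℓ-1}` (addition modulo `r`) for independent `Y_j ∼ f j`. -/
def mconvTuple {r ℓ : ℕ} [NeZero r] (f : Fin ℓ → Fin r → ℝ) : Fin r → ℝ :=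
  fun z => ∑ y : Fin ℓ → Fin r, if (∑ j, y j) = z then ∏ j, f j (y j) else 0

-- ===================== auxiliary lemmas =====================

lemma sum_univ_inst {γ M : Type*} [AddCommMonoid M] (i1 i2 : Fintype γ) (f : γ → M) :
    @Finset.sum γ M _ (@Finset.univ γ i1) f = @Finset.sum γ M _ (@Finset.univ γ i2) f := by
  rw [Subsingleton.elim i1 i2]

lemma ite_inst {p : Prop} (i1 i2 : Decidable p) {M : Type*} (a b : M) :
    @ite M p i1 a b = @ite M p i2 a b := by
  rw [Subsingleton.elim i1 i2]

lemma condEnt_inst {α β : Type*} [Fintype α] (i1 i2 : Fintype β) (π : α → β → ℝ) :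
    @condEnt α β _ i1 π = @condEnt α β _ i2 π := by
  rw [Subsingleton.elim i1 i2]

lemma aux_marg_prod {ι : Type*} [Fintype ι] [DecidableEq ι] {κ : Type*} [Fintype κ]
    [DecidableEq κ] (f : ι → κ → ℝ) (hf : ∀ i, ∑ c, f i c = 1) (i₀ : ι) (b : κ) :
    ∑ v : ι → κ, (if v i₀ = b then ∏ i, f i (v i) else 0) = f i₀ b := by
  have key : ∀ v : ι → κ, (if v i₀ = b then ∏ i, f i (v i) else 0)
      = ∏ i, (if i = i₀ then (if v i = b then f i (v i) else 0) else f i (v i)) := by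
    intro v
    by_cases hv : v i₀ = b
    · rw [if_pos hv]
      refine Finset.prod_congr rfl fun i _ => ?_
      by_cases hi : i = i₀
      · subst hi; simp [hv]
      · simp [hi]
    · rw [if_neg hv]
      refine (Finset.prod_eq_zero (Finset.mem_univ i₀) ?_).symm
      simp [hv]
  calc ∑ v : ι → κ, (if v i₀ = b then ∏ i, f i (v i) else 0)
      = ∑ v : ι → κ, ∏ i, (if i = i₀ then (if v i = b then f i (v i) else 0) else f i (v i)) :=
        Finset.sum_congr rfl fun v _ => key v
    _ = ∏ i, ∑ c, (if i = i₀ then (if c = b then f i c else 0) else f i c) := by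
        rw [Fintype.prod_sum (fun i c => if i = i₀ then (if c = b then f i c else 0) else f i c)]
    _ = f i₀ b := by
        rw [Finset.prod_eq_single i₀ (fun i _ hi => by simp [hi, hf i]) (by simp)]
        simp

lemma aux_prod_sum_one {ι : Type*} [Fintype ι] [DecidableEq ι] {κ : Type*} [Fintype κ]
    (f : ι → κ → ℝ) (hf : ∀ i, ∑ c, f i c = 1) :
    ∑ v : ι → κ, ∏ i, f i (v i) = 1 := by
  rw [← Fintype.prod_sum]
  simp [hf]

lemma aux_condEnt_nonneg {α β : Type*} [Fintype α] [Fintype β] (π : α → β → ℝ)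
    (h : ∀ x y, 0 ≤ π x y) : 0 ≤ condEnt π := by
  rw [condEnt, neg_nonneg]
  refine Finset.sum_nonpos fun y _ => Finset.sum_nonpos fun x _ => ?_
  rcases eq_or_lt_of_le (h x y) with h0 | h0
  · simp [← h0]
  · have hT : π x y ≤ ∑ x', π x' y :=
      Finset.single_le_sum (fun x' _ => h x' y) (Finset.mem_univ x)
    have hlog : Real.log (π x y / ∑ x', π x' y) ≤ 0 :=
      Real.log_nonpos (div_nonneg h0.le (le_trans h0.le hT))
        (div_le_one_of_le₀ hT (le_trans h0.le hT))
    exact mul_nonpos_iff.mpr (Or.inl ⟨h0.le, hlog⟩)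

lemma aux_keySum {n : ℕ} {V W : Type*} [Fintype V] [Fintype W] [DecidableEq W]
    (σ : V → W) (F : (Fin n → W) → ℝ) (G : Fin n → V → ℝ) :
    ∑ u : Fin n → V, F (fun t => σ (u t)) * ∏ t, G t (u t)
      = ∑ z : Fin n → W, F z * ∏ t, ∑ v : V, (if σ v = z t then G t v else 0) := by
  have key : ∀ (u : Fin n → V) (z : Fin n → W),
      (∏ t, if σ (u t) = z t then G t (u t) else 0)
        = if z = (fun t => σ (u t)) then ∏ t, G t (u t) else 0 := by
    intro u z
    by_cases h : z = fun t => σ (u t)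
    · subst h; simp
    · rw [if_neg h]
      obtain ⟨t, ht⟩ : ∃ t, σ (u t) ≠ z t := by
        by_contra hc
        push_neg at hc
        exact h (funext fun t => (hc t).symm)
      exact Finset.prod_eq_zero (Finset.mem_univ t) (if_neg ht)
  calc ∑ u : Fin n → V, F (fun t => σ (u t)) * ∏ t, G t (u t)
      = ∑ u : Fin n → V, ∑ z : Fin n → W,
          F z * ∏ t, (if σ (u t) = z t then G t (u t) else 0) := by
        refine Finset.sum_congr rfl fun u _ => ?_
        rw [Finset.sum_congr rfl fun z _ => by rw [key u z]]
        simp only [mul_ite, mul_zero]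
        rw [Finset.sum_ite_eq' Finset.univ (fun t => σ (u t))
          (fun z => F z * ∏ t, G t (u t))]
        simp
    _ = ∑ z : Fin n → W, ∑ u : Fin n → V,
          F z * ∏ t, (if σ (u t) = z t then G t (u t) else 0) := Finset.sum_comm
    _ = ∑ z : Fin n → W, F z * ∏ t, ∑ v : V, (if σ v = z t then G t v else 0) := by
        refine Finset.sum_congr rfl fun z _ => ?_
        rw [← Finset.mul_sum]
        congr 1
        rw [Fintype.prod_sum (fun t v => if σ v = z t then G t v else 0)]

-- ===================== the product coupling =====================

lemma aux_prod_coupling {r n : ℕ} [NeZero r] (P : Fin r → ℝ) (hP : IsProbDist P)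
    (Qi : Fin n → Fin r → ℝ) (hQ0 : ∀ t c, 0 ≤ Qi t c) (hQ1 : ∀ t, ∑ c, Qi t c = 1) :
    IsCouplingList (β := fun _ : Fin n => Fin r)
      (fun x z => P x * ∏ t, Qi t (z t)) P Qi := by
  classical
  refine ⟨fun x z => mul_nonneg (hP.1 x) (Finset.prod_nonneg fun t _ => hQ0 _ _), ?_, ?_⟩
  · intro x
    have key : (∑ z : Fin n → Fin r, P x * ∏ t, Qi t (z t)) = P x := by
      rw [← Finset.mul_sum, aux_prod_sum_one Qi hQ1, mul_one]
    exact Eq.trans (sum_univ_inst _ _ _) key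
  · intro t b
    have key : (∑ x, ∑ z : Fin n → Fin r,
        (if z t = b then P x * ∏ s, Qi s (z s) else 0)) = Qi t b := by
      have h1 : ∀ x, (∑ z : Fin n → Fin r, if z t = b then P x * ∏ s, Qi s (z s) else 0)
          = P x * Qi t b := by
        intro x
        rw [← aux_marg_prod Qi hQ1 t b, Finset.mul_sum]
        refine Finset.sum_congr rfl fun z _ => ?_
        split_ifs <;> simp
      rw [Finset.sum_congr rfl fun x _ => h1 x, ← Finset.sum_mul, hP.2, one_mul]
    refine Eq.trans ?_ key
    refine Finset.sum_congr rfl fun x _ => ?_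
    exact Eq.trans (sum_univ_inst _ _ _) (Finset.sum_congr rfl fun z _ => ite_inst _ _ _ _)

-- ===================== the main construction =====================

lemma aux_exists_coupling {r n ℓ : ℕ} [NeZero r]
    (P : Fin r → ℝ) (Q : Fin n × Fin ℓ → Fin r → ℝ)
    (hQ0 : ∀ p x, 0 ≤ Q p x) (hQ1 : ∀ p, ∑ x, Q p x = 1)
    (π' : Fin r → (Fin n → Fin r) → ℝ)
    (hπ' : IsCouplingList π' P (fun t => mconvTuple (fun j : Fin ℓ => Q (t, j)))) :
    ∃ π : Fin r → ((Fin n × Fin ℓ) → Fin r) → ℝ,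
      IsCouplingList π P Q ∧ condEnt π = condEnt π' := by
  classical
  set R : Fin n → Fin r → ℝ := fun t => mconvTuple (fun j : Fin ℓ => Q (t, j)) with hRdef
  obtain ⟨hπ'0, hπ'P, hπ'R⟩ := hπ'
  set σf : (Fin ℓ → Fin r) → Fin r := fun v => ∑ j, v j with hσf
  set qp : Fin n → (Fin ℓ → Fin r) → ℝ := fun t v => ∏ j, Q (t, j) (v j) with hqp
  set w : Fin n → (Fin ℓ → Fin r) → ℝ := fun t v => qp t v / R t (σf v) with hw
  -- bridged (default-instance) versions of the coupling hypotheses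
  have hπ'P2 : ∀ x, (∑ z : Fin n → Fin r, π' x z) = P x := by
    intro x
    exact Eq.trans (sum_univ_inst _ _ _) (hπ'P x)
  have hπ'R2 : ∀ (t : Fin n) (c : Fin r),
      (∑ x, ∑ z : Fin n → Fin r, if z t = c then π' x z else 0) = R t c := by
    intro t c
    refine Eq.trans ?_ (hπ'R t c)
    refine Finset.sum_congr rfl fun x _ => ?_
    exact Eq.trans (sum_univ_inst _ _ _) (Finset.sum_congr rfl fun z _ => ite_inst _ _ _ _)
  -- basic facts
  have hRexp : ∀ t c, R t c = ∑ v : Fin ℓ → Fin r, (if σf v = c then qp t v else 0) := by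
    intro t c; rfl
  have hqp0 : ∀ t v, 0 ≤ qp t v := fun t v => Finset.prod_nonneg fun j _ => hQ0 _ _
  have hR0 : ∀ t c, 0 ≤ R t c := by
    intro t c
    rw [hRexp]
    refine Finset.sum_nonneg fun v _ => ?_
    split_ifs
    · exact hqp0 t v
    · exact le_rfl
  have hw0 : ∀ t v, 0 ≤ w t v := fun t v => div_nonneg (hqp0 t v) (hR0 _ _)
  have hB : ∀ t c, (∑ v : Fin ℓ → Fin r, if σf v = c then w t v else 0)
      = if R t c = 0 then 0 else 1 := by
    intro t c
    have step : ∀ v : Fin ℓ → Fin r, (if σf v = c then w t v else 0)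
        = (if σf v = c then qp t v else 0) / R t c := by
      intro v
      by_cases hv : σf v = c
      · rw [if_pos hv, if_pos hv, hw]
        show qp t v / R t (σf v) = qp t v / R t c
        rw [hv]
      · rw [if_neg hv, if_neg hv, zero_div]
    rw [Finset.sum_congr rfl fun v _ => step v, ← Finset.sum_div, ← hRexp]
    by_cases hc : R t c = 0
    · rw [if_pos hc, hc]; exact zero_div 0
    · rw [if_neg hc]; exact div_self hc
  have hMzero : ∀ z : Fin n → Fin r, (∃ t, R t (z t) = 0) → ∀ x, π' x z = 0 := by
    rintro z ⟨t, ht⟩ x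
    have h0 : (∑ x', ∑ z' : Fin n → Fin r, (if z' t = z t then π' x' z' else 0)) = 0 :=
      (hπ'R2 t (z t)).trans ht
    have hterm : ∀ (x' : Fin r) (z' : Fin n → Fin r),
        0 ≤ (if z' t = z t then π' x' z' else 0) := by
      intro x' z'
      split_ifs
      · exact hπ'0 _ _
      · exact le_rfl
    have h1 := (Finset.sum_eq_zero_iff_of_nonneg
      (fun x' _ => Finset.sum_nonneg fun z' _ => hterm x' z')).mp h0 x (Finset.mem_univ x)
    have h2 := (Finset.sum_eq_zero_iff_of_nonneg
      (fun z' _ => hterm x z')).mp h1 z (Finset.mem_univ z)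
    simpa using h2
  -- the coupling
  set πf : Fin r → ((Fin n × Fin ℓ) → Fin r) → ℝ :=
    fun x y => π' x (fun t => σf (fun j => y (t, j))) * ∏ t, w t (fun j => y (t, j)) with hπf
  have hπf0 : ∀ x y, 0 ≤ πf x y :=
    fun x y => mul_nonneg (hπ'0 _ _) (Finset.prod_nonneg fun t _ => hw0 _ _)
  -- X marginal (default-instance version)
  have hXm : ∀ x, (∑ y : (Fin n × Fin ℓ) → Fin r, πf x y) = P x := by
    intro x
    calc ∑ y : (Fin n × Fin ℓ) → Fin r, πf x y
        = ∑ u : Fin n → Fin ℓ → Fin r, π' x (fun t => σf (u t)) * ∏ t, w t (u t) :=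
          (Equiv.sum_comp (Equiv.curry (Fin n) (Fin ℓ) (Fin r)).symm
            (fun y => πf x y)).symm
      _ = ∑ z : Fin n → Fin r, π' x z * ∏ t, ∑ v, (if σf v = z t then w t v else 0) :=
          aux_keySum σf (π' x) w
      _ = ∑ z : Fin n → Fin r, π' x z := by
          refine Finset.sum_congr rfl fun z _ => ?_
          by_cases hz : ∀ t, R t (z t) ≠ 0
          · rw [Finset.prod_congr rfl fun t _ => by rw [hB t (z t), if_neg (hz t)]]
            simp
          · push_neg at hz
            rw [hMzero z hz x, zero_mul]
      _ = P x := hπ'P2 x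
  -- Y marginals (default-instance version)
  have hYm : ∀ (t₀ : Fin n) (j₀ : Fin ℓ) (b : Fin r),
      (∑ x, ∑ y : (Fin n × Fin ℓ) → Fin r, if y (t₀, j₀) = b then πf x y else 0)
        = Q (t₀, j₀) b := by
    intro t₀ j₀ b
    set G : Fin n → (Fin ℓ → Fin r) → ℝ :=
      fun t v => if t = t₀ then (if v j₀ = b then w t v else 0) else w t v with hG
    set E : Fin r → ℝ :=
      fun c => ∑ v : Fin ℓ → Fin r,
        (if σf v = c then (if v j₀ = b then w t₀ v else 0) else 0) with hE
    set D : Fin r → ℝ :=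
      fun c => ∑ v : Fin ℓ → Fin r,
        (if σf v = c then (if v j₀ = b then qp t₀ v else 0) else 0) with hD
    set F : (Fin n → Fin r) → ℝ := fun z => ∑ x, π' x z with hF
    have hFz : ∀ z : Fin n → Fin r, (∃ t, R t (z t) = 0) → F z = 0 :=
      fun z hz => Finset.sum_eq_zero fun x _ => hMzero z hz x
    have hED : ∀ c, E c = D c / R t₀ c := by
      intro c
      have step : ∀ v : Fin ℓ → Fin r,
          (if σf v = c then (if v j₀ = b then w t₀ v else 0) else 0)
            = (if σf v = c then (if v j₀ = b then qp t₀ v else 0) else 0) / R t₀ c := by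
        intro v
        by_cases hv : σf v = c
        · rw [if_pos hv, if_pos hv]
          by_cases hb2 : v j₀ = b
          · rw [if_pos hb2, if_pos hb2, hw]
            show qp t₀ v / R t₀ (σf v) = qp t₀ v / R t₀ c
            rw [hv]
          · rw [if_neg hb2, if_neg hb2, zero_div]
        · rw [if_neg hv, if_neg hv, zero_div]
      show (∑ v : Fin ℓ → Fin r,
          if σf v = c then (if v j₀ = b then w t₀ v else 0) else 0) = D c / R t₀ c
      rw [Finset.sum_congr rfl fun v _ => step v, ← Finset.sum_div]
    have hD0 : ∀ c, 0 ≤ D c := by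
      intro c
      refine Finset.sum_nonneg fun v _ => ?_
      split_ifs
      · exact hqp0 _ _
      · exact le_rfl
      · exact le_rfl
    have hDR : ∀ c, D c ≤ R t₀ c := by
      intro c
      rw [hRexp, hD]
      refine Finset.sum_le_sum fun v _ => ?_
      by_cases hv : σf v = c
      · rw [if_pos hv, if_pos hv]
        split_ifs
        · exact le_rfl
        · exact hqp0 _ _
      · rw [if_neg hv, if_neg hv]
    have hFR : ∀ c, (∑ z : Fin n → Fin r, if z t₀ = c then F z else 0) = R t₀ c := by
      intro c
      rw [← hπ'R2 t₀ c, Finset.sum_comm]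
      refine Finset.sum_congr rfl fun z _ => ?_
      by_cases hz : z t₀ = c
      · simp [hz, hF]
      · simp [hz]
    calc (∑ x, ∑ y : (Fin n × Fin ℓ) → Fin r, if y (t₀, j₀) = b then πf x y else 0)
        = ∑ y : (Fin n × Fin ℓ) → Fin r, ∑ x, (if y (t₀, j₀) = b then πf x y else 0) :=
          Finset.sum_comm
      _ = ∑ y : (Fin n × Fin ℓ) → Fin r,
            (if y (t₀, j₀) = b then
              F (fun t => σf (fun j => y (t, j))) * ∏ t, w t (fun j => y (t, j)) else 0) := by
          refine Finset.sum_congr rfl fun y _ => ?_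
          by_cases hy : y (t₀, j₀) = b
          · rw [if_pos hy]
            rw [Finset.sum_congr rfl fun x _ => if_pos hy]
            rw [hF, ← Finset.sum_mul]
          · rw [if_neg hy]
            exact Finset.sum_eq_zero fun x _ => if_neg hy
      _ = ∑ u : Fin n → Fin ℓ → Fin r,
            (if u t₀ j₀ = b then F (fun t => σf (u t)) * ∏ t, w t (u t) else 0) :=
          (Equiv.sum_comp (Equiv.curry (Fin n) (Fin ℓ) (Fin r)).symm
            (fun y => if y (t₀, j₀) = b then
              F (fun t => σf (fun j => y (t, j))) * ∏ t, w t (fun j => y (t, j)) else 0)).symm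
      _ = ∑ u : Fin n → Fin ℓ → Fin r, F (fun t => σf (u t)) * ∏ t, G t (u t) := by
          refine Finset.sum_congr rfl fun u _ => ?_
          by_cases hb : u t₀ j₀ = b
          · rw [if_pos hb]
            congr 1
            refine Finset.prod_congr rfl fun t _ => ?_
            by_cases ht : t = t₀
            · subst ht
              rw [hG]
              simp [hb]
            · rw [hG]
              simp [ht]
          · rw [if_neg hb]
            refine (mul_eq_zero_of_right _ ?_).symm
            refine Finset.prod_eq_zero (Finset.mem_univ t₀) ?_
            rw [hG]
            simp [hb]
      _ = ∑ z : Fin n → Fin r, F z * ∏ t, ∑ v, (if σf v = z t then G t v else 0) :=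
          aux_keySum σf F G
      _ = ∑ z : Fin n → Fin r, F z * E (z t₀) := by
          refine Finset.sum_congr rfl fun z _ => ?_
          by_cases hz : ∀ t, R t (z t) ≠ 0
          · congr 1
            rw [Finset.prod_eq_single t₀ ?_ (by simp)]
            · rw [hE]
              refine Finset.sum_congr rfl fun v _ => ?_
              congr 1
              rw [hG]
              simp
            · intro t _ ht
              have : (∑ v : Fin ℓ → Fin r, if σf v = z t then G t v else 0)
                  = ∑ v : Fin ℓ → Fin r, if σf v = z t then w t v else 0 := by
                refine Finset.sum_congr rfl fun v _ => ?_
                congr 1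
                rw [hG]
                simp [ht]
              rw [this, hB t (z t), if_neg (hz t)]
          · push_neg at hz
            rw [hFz z hz, zero_mul, zero_mul]
      _ = ∑ z : Fin n → Fin r, ∑ c, (if z t₀ = c then F z * E c else 0) := by
          refine Finset.sum_congr rfl fun z _ => ?_
          rw [Finset.sum_ite_eq]
          simp
      _ = ∑ c, ∑ z : Fin n → Fin r, (if z t₀ = c then F z * E c else 0) := Finset.sum_comm
      _ = ∑ c, (∑ z : Fin n → Fin r, (if z t₀ = c then F z else 0)) * E c := by
          refine Finset.sum_congr rfl fun c _ => ?_
          rw [Finset.sum_mul]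
          refine Finset.sum_congr rfl fun z _ => ?_
          split_ifs
          · rfl
          · rw [zero_mul]
      _ = ∑ c, R t₀ c * E c := by
          refine Finset.sum_congr rfl fun c _ => ?_
          rw [hFR c]
      _ = ∑ c, D c := by
          refine Finset.sum_congr rfl fun c _ => ?_
          rw [hED c]
          by_cases hc : R t₀ c = 0
          · have hDc : D c = 0 := le_antisymm (hc ▸ hDR c) (hD0 c)
            rw [hc, hDc, zero_mul]
          · rw [mul_comm, div_mul_cancel₀ _ hc]
      _ = Q (t₀, j₀) b := by
          rw [hD, Finset.sum_comm]
          have h1 : ∀ v : Fin ℓ → Fin r,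
              (∑ c, if σf v = c then (if v j₀ = b then qp t₀ v else 0) else 0)
                = (if v j₀ = b then qp t₀ v else 0) := by
            intro v
            rw [Finset.sum_ite_eq]
            simp
          rw [Finset.sum_congr rfl fun v _ => h1 v]
          rw [hqp]
          exact aux_marg_prod (fun j => Q (t₀, j)) (fun j => hQ1 (t₀, j)) j₀ b
  -- conditional entropy (default-instance version)
  have hCE : (∑ y : (Fin n × Fin ℓ) → Fin r, ∑ x, πf x y * Real.log (πf x y / ∑ x', πf x' y))
      = ∑ z : Fin n → Fin r, ∑ x, π' x z * Real.log (π' x z / ∑ x', π' x' z) := by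
    set g : (Fin n → Fin r) → ℝ :=
      fun z => ∑ x, π' x z * Real.log (π' x z / ∑ x', π' x' z) with hg
    have hgz : ∀ z : Fin n → Fin r, (∃ t, R t (z t) = 0) → g z = 0 := by
      intro z hz
      rw [hg]
      exact Finset.sum_eq_zero fun x _ => by rw [hMzero z hz x, zero_mul]
    calc ∑ y : (Fin n × Fin ℓ) → Fin r, ∑ x, πf x y * Real.log (πf x y / ∑ x', πf x' y)
        = ∑ y : (Fin n × Fin ℓ) → Fin r,
            g (fun t => σf (fun j => y (t, j))) * ∏ t, w t (fun j => y (t, j)) := by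
          refine Finset.sum_congr rfl fun y _ => ?_
          have hT : (∑ x', πf x' y)
              = (∑ x', π' x' (fun t => σf (fun j => y (t, j)))) * ∏ t, w t (fun j => y (t, j)) :=
            (Finset.sum_mul _ _ _).symm
          by_cases hW : (∏ t, w t (fun j => y (t, j))) = 0
          · rw [hW, mul_zero]
            refine Finset.sum_eq_zero fun x _ => ?_
            rw [hπf]
            show (π' x (fun t => σf (fun j => y (t, j))) * ∏ t, w t (fun j => y (t, j)))
              * Real.log _ = 0
            rw [hW, mul_zero, zero_mul]
          · rw [hg, Finset.sum_mul]
            refine Finset.sum_congr rfl fun x _ => ?_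
            rw [hT, hπf]
            show (π' x (fun t => σf (fun j => y (t, j))) * ∏ t, w t (fun j => y (t, j)))
                * Real.log ((π' x (fun t => σf (fun j => y (t, j)))
                    * ∏ t, w t (fun j => y (t, j)))
                  / ((∑ x', π' x' (fun t => σf (fun j => y (t, j))))
                    * ∏ t, w t (fun j => y (t, j))))
              = π' x (fun t => σf (fun j => y (t, j)))
                  * Real.log (π' x (fun t => σf (fun j => y (t, j)))
                    / ∑ x', π' x' (fun t => σf (fun j => y (t, j))))
                * ∏ t, w t (fun j => y (t, j))
            rw [mul_div_mul_right _ _ hW]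
            ring
      _ = ∑ u : Fin n → Fin ℓ → Fin r, g (fun t => σf (u t)) * ∏ t, w t (u t) :=
          (Equiv.sum_comp (Equiv.curry (Fin n) (Fin ℓ) (Fin r)).symm
            (fun y => g (fun t => σf (fun j => y (t, j))) * ∏ t, w t (fun j => y (t, j)))).symm
      _ = ∑ z : Fin n → Fin r, g z * ∏ t, ∑ v, (if σf v = z t then w t v else 0) :=
          aux_keySum σf g w
      _ = ∑ z : Fin n → Fin r, g z := by
          refine Finset.sum_congr rfl fun z _ => ?_
          by_cases hz : ∀ t, R t (z t) ≠ 0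
          · rw [Finset.prod_congr rfl fun t _ => by rw [hB t (z t), if_neg (hz t)]]
            simp
          · push_neg at hz
            rw [hgz z hz, zero_mul]
  refine ⟨πf, ⟨hπf0, ?_, ?_⟩, ?_⟩
  · intro x
    exact Eq.trans (sum_univ_inst _ _ _) (hXm x)
  · rintro ⟨t₀, j₀⟩ b
    refine Eq.trans ?_ (hYm t₀ j₀ b)
    refine Finset.sum_congr rfl fun x _ => ?_
    exact Eq.trans (sum_univ_inst _ _ _) (Finset.sum_congr rfl fun y _ => ite_inst _ _ _ _)
  · rw [condEnt, condEnt, hCE]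


/-- block reduction: for `P ∈ Δ([r])` and `Q_1, …, Q_{nℓ} ∈ Δ([r])`
(coordinates indexed by pairs `(t, j) ∈ [n] × [ℓ]`), with
`R_t` the modular convolution of the `t`-th block,
`H(P‖Q_1,…,Q_{nℓ}) ≤ H(P‖R_1,…,R_n)`. -/
theorem block_reduction (r : ℕ) [NeZero r] (hr : 2 ≤ r)
    (n ℓ : ℕ) (hn : 1 ≤ n) (hℓ : 1 ≤ ℓ)
    (P : Fin r → ℝ) (hP : IsProbDist P)
    (Q : Fin n × Fin ℓ → Fin r → ℝ) (hQ : ∀ p, IsProbDist (Q p)) :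
    Hlist (β := fun _ : Fin n × Fin ℓ => Fin r) P Q
      ≤ Hlist (β := fun _ : Fin n => Fin r) P
          (fun t => mconvTuple (fun j : Fin ℓ => Q (t, j))) := by
  classical
  have hQ0 : ∀ p x, 0 ≤ Q p x := fun p => (hQ p).1
  have hQ1 : ∀ p, ∑ x, Q p x = 1 := fun p => (hQ p).2
  set R : Fin n → Fin r → ℝ := fun t => mconvTuple (fun j : Fin ℓ => Q (t, j)) with hRdef
  have hRexp : ∀ t c, R t c
      = ∑ v : Fin ℓ → Fin r, (if (∑ j, v j) = c then ∏ j, Q (t, j) (v j) else 0) := by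
    intro t c; rfl
  have hR0 : ∀ t c, 0 ≤ R t c := by
    intro t c
    rw [hRexp]
    refine Finset.sum_nonneg fun v _ => ?_
    split_ifs
    · exact Finset.prod_nonneg fun j _ => hQ0 _ _
    · exact le_rfl
  have hR1 : ∀ t, ∑ c, R t c = 1 := by
    intro t
    rw [Finset.sum_congr rfl fun c _ => hRexp t c, Finset.sum_comm]
    have h1 : ∀ v : Fin ℓ → Fin r,
        (∑ c, if (∑ j, v j) = c then ∏ j, Q (t, j) (v j) else 0)
          = ∏ j, Q (t, j) (v j) := by
      intro v
      rw [Finset.sum_ite_eq]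
      simp
    rw [Finset.sum_congr rfl fun v _ => h1 v]
    exact aux_prod_sum_one (fun j => Q (t, j)) (fun j => hQ1 (t, j))
  rw [Hlist, Hlist]
  apply csInf_le_csInf
  · refine ⟨0, fun h hmem => ?_⟩
    obtain ⟨π, hπc, hc⟩ := hmem
    rw [← hc]
    exact le_of_le_of_eq (aux_condEnt_nonneg π hπc.1) (condEnt_inst _ _ π)
  · exact ⟨_, ⟨fun x z => P x * ∏ t, R t (z t), aux_prod_coupling P hP R hR0 hR1, rfl⟩⟩
  · rintro h ⟨π', hπ', hc⟩
    obtain ⟨π, hπQ, hce⟩ := aux_exists_coupling P Q hQ0 hQ1 π' hπ'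
    refine ⟨π, hπQ, ?_⟩
    rw [← hc]
    exact (condEnt_inst _ _ π).trans (hce.trans (condEnt_inst _ _ π'))


end
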